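/- Let μ : {1,2,3,…} → {0,1} be a 0-1 word. The graph G_μ is prime if and only if μ is not one of the four words 0111…, 1000…, 00111…, 11000… (i.e., μ is not of the form: one letter a followed by the constant word on the opposite letter, nor two equal letters a a followed by the constant word on the opposite letter). -/

import Mathlib

/-- Adjacency rule of the graph associated with a 0-1 word `μ` (letters indexed from 1):
for `i < j`, `{i,j}` is an edge iff (`μ j = 1` and `j = i+1`) or (`μ j = 0` and `j ≠ i+1`). -/
def GmuAdj (μ : ℕ → Bool) (i j : ℕ) : Prop :=
  (i < j ∧ ((μ j = true ∧ j = i + 1) ∨ (μ j = false ∧ j ≠ i + 1))) ∨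
  (j < i ∧ ((μ i = true ∧ i = j + 1) ∨ (μ i = false ∧ i ≠ j + 1)))

/-- The graph `G_μ` on `ℕ` associated with the 0-1 word `μ : {1,2,…} → {0,1}`. -/
def Gmu (μ : ℕ → Bool) : SimpleGraph ℕ where
  Adj i j := GmuAdj μ i j
  symm := ⟨fun i j h => Or.symm h⟩
  loopless := ⟨fun i h => by
    rcases h with ⟨h1, _⟩ | ⟨h1, _⟩ <;> exact lt_irrefl i h1⟩

/-- Adjacency rule for the graph of a finite 0-1 word `w = w₁…wₙ` on vertices `{0,…,n}`. -/
def GWAdj (w : List Bool) (i j : ℕ) : Prop :=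
  (i < j ∧ ((w.getD (j - 1) false = true ∧ j = i + 1) ∨
            (w.getD (j - 1) false = false ∧ j ≠ i + 1))) ∨
  (j < i ∧ ((w.getD (i - 1) false = true ∧ i = j + 1) ∨
            (w.getD (i - 1) false = false ∧ i ≠ j + 1)))

/-- The graph `G_w` of a finite 0-1 word `w = w₁…wₙ`, on the vertex set `{0,1,…,n}`. -/
def GW (w : List Bool) : SimpleGraph (Fin (w.length + 1)) where
  Adj i j := GWAdj w i j
  symm := ⟨fun i j h => Or.symm h⟩
  loopless := ⟨fun i h => by
    rcases h with ⟨h1, _⟩ | ⟨h1, _⟩ <;> exact lt_irrefl (i : ℕ) h1⟩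

/-- `M` is a module of the graph `G`: every vertex outside `M` is adjacent either to all
vertices of `M` or to none of them. -/
def IsModule {V : Type*} (G : SimpleGraph V) (M : Set V) : Prop :=
  ∀ x ∉ M, (∀ a ∈ M, G.Adj x a) ∨ (∀ a ∈ M, ¬ G.Adj x a)

/-- A graph is prime if its only modules are the empty set, singletons and the whole
vertex set. -/
def GraphPrime {V : Type*} (G : SimpleGraph V) : Prop :=
  ∀ M : Set V, IsModule G M → M = ∅ ∨ (∃ a, M = {a}) ∨ M = Set.univ

section Helpers

lemma gmu_adj_consec (μ : ℕ → Bool) {i j : ℕ} (h : j = i + 1) :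
    (Gmu μ).Adj i j ↔ μ j = true := by
  show GmuAdj μ i j ↔ _
  unfold GmuAdj
  constructor
  · rintro (⟨_, (⟨h1, _⟩ | ⟨_, h2⟩)⟩ | ⟨h1, _⟩)
    · exact h1
    · omega
    · omega
  · intro h1
    exact Or.inl ⟨by omega, Or.inl ⟨h1, h⟩⟩

lemma gmu_adj_far (μ : ℕ → Bool) {i j : ℕ} (h : i + 1 < j) :
    (Gmu μ).Adj i j ↔ μ j = false := by
  show GmuAdj μ i j ↔ _
  unfold GmuAdj
  constructor
  · rintro (⟨_, (⟨_, h2⟩ | ⟨h1, _⟩)⟩ | ⟨h1, _⟩)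
    · omega
    · exact h1
    · omega
  · intro h1
    exact Or.inl ⟨by omega, Or.inr ⟨h1, by omega⟩⟩

lemma not_prime_aux (μ : ℕ → Bool) (x : ℕ)
    (h : (∀ a, a ≠ x → ¬ (Gmu μ).Adj x a) ∨ (∀ a, a ≠ x → (Gmu μ).Adj x a)) :
    ¬ GraphPrime (Gmu μ) := by
  intro hp
  have hmod : IsModule (Gmu μ) {n | n ≠ x} := by
    intro y hy
    have hyx : y = x := by simpa [Set.mem_setOf_eq, not_not] using hy
    subst hyx
    rcases h with h | h
    · right; intro a ha; exact h a ha
    · left; intro a ha; exact h a ha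
  rcases hp _ hmod with h0 | ⟨a, ha⟩ | hu
  · have : x + 1 ∈ ({n | n ≠ x} : Set ℕ) := by simp
    rw [h0] at this; exact this
  · have h1 : x + 1 ∈ ({n | n ≠ x} : Set ℕ) := by simp
    have h2 : x + 2 ∈ ({n | n ≠ x} : Set ℕ) := by simp
    rw [ha] at h1 h2
    simp only [Set.mem_singleton_iff] at h1 h2
    omega
  · have : x ∈ ({n | n ≠ x} : Set ℕ) := hu ▸ Set.mem_univ x
    simp at this

lemma key_lemma (μ : ℕ → Bool) (M : Set ℕ) (hM : IsModule (Gmu μ) M) {a b : ℕ}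
    (ha : a ∈ M) (hb : b ∈ M) (hab : a < b) (hne : M ≠ Set.univ) :
    ((μ 1 = false ∧ ∀ j : ℕ, 2 ≤ j → μ j = true) ∨
     (μ 1 = true ∧ ∀ j : ℕ, 2 ≤ j → μ j = false) ∨
     (μ 1 = false ∧ μ 2 = false ∧ ∀ j : ℕ, 3 ≤ j → μ j = true) ∨
     (μ 1 = true ∧ μ 2 = true ∧ ∀ j : ℕ, 3 ≤ j → μ j = false)) := by
  classical
  -- Step A: if c < d are both in M then d+1 ∈ M
  have stepA : ∀ c ∈ M, ∀ d ∈ M, c < d → d + 1 ∈ M := by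
    intro c hc d hd hcd
    by_contra hnot
    rcases hM (d+1) hnot with hall | hnone
    · have h1 := hall d hd
      have h2 := hall c hc
      rw [(Gmu μ).adj_comm, gmu_adj_consec μ rfl] at h1
      rw [(Gmu μ).adj_comm, gmu_adj_far μ (by omega)] at h2
      rw [h1] at h2; exact Bool.noConfusion h2
    · have h1 := hnone d hd
      have h2 := hnone c hc
      rw [(Gmu μ).adj_comm, gmu_adj_consec μ rfl] at h1
      rw [(Gmu μ).adj_comm, gmu_adj_far μ (by omega)] at h2
      cases hcase : μ (d+1)
      · exact h2 hcase
      · exact h1 hcase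
  -- the tail [b, ∞) is contained in M
  have tail : ∀ n, b ≤ n → n ∈ M := by
    intro n hn
    induction n, hn using Nat.le_induction with
    | base => exact hb
    | succ n hbn ih => exact stepA a ha n ih (by omega)
  -- pick the largest non-member x
  obtain ⟨x0, hx0⟩ : ∃ x0, x0 ∉ M := by
    by_contra h
    push_neg at h
    exact hne (Set.eq_univ_of_forall h)
  have hx0lt : x0 < b := by
    by_contra h
    exact hx0 (tail x0 (by omega))
  obtain ⟨x, hxS, hxmax⟩ : ∃ x ∈ (Finset.range b).filter (fun n => n ∉ M),
      ∀ y ∈ (Finset.range b).filter (fun n => n ∉ M), y ≤ x := by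
    have hSne : ((Finset.range b).filter (fun n => n ∉ M)).Nonempty :=
      ⟨x0, by simp [Finset.mem_filter, Finset.mem_range, hx0lt, hx0]⟩
    exact ⟨_, Finset.max'_mem _ hSne, fun y hy => Finset.le_max' _ y hy⟩
  have hxM : x ∉ M := by
    simp only [Finset.mem_filter] at hxS
    exact hxS.2
  have hgt : ∀ y, x < y → y ∈ M := by
    intro y hy
    by_contra hyM
    have hyb : y < b := by
      by_contra h
      exact hyM (tail y (by omega))
    have hymem : y ∈ (Finset.range b).filter (fun n => n ∉ M) := by
      simp only [Finset.mem_filter, Finset.mem_range]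
      exact ⟨hyb, hyM⟩
    have := hxmax y hymem
    omega
  rcases hM x hxM with hall | hnone
  · -- x is adjacent to everything in M : patterns 2 and 4
    have hx1 : μ (x+1) = true := by
      have h1 := hall (x+1) (hgt _ (by omega))
      rwa [gmu_adj_consec μ rfl] at h1
    have htail : ∀ d, x + 2 ≤ d → μ d = false := by
      intro d hd
      have h1 := hall d (hgt _ (by omega))
      rwa [gmu_adj_far μ (by omega)] at h1
    have hbelow : ∀ y, y < x → y ∈ M := by
      intro y hy
      by_contra hyM
      rcases hM y hyM with hall' | hnone'
      · have h1 := hall' (x+1) (hgt _ (by omega))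
        rw [gmu_adj_far μ (by omega)] at h1
        rw [hx1] at h1; exact Bool.noConfusion h1
      · have h1 := hnone' (x+2) (hgt _ (by omega))
        rw [gmu_adj_far μ (by omega)] at h1
        exact h1 (htail (x+2) le_rfl)
    have hxle : x ≤ 1 := by
      by_contra h
      obtain ⟨z, rfl⟩ : ∃ z, x = z + 2 := ⟨x - 2, by omega⟩
      have h1 := hall (z+1) (hbelow _ (by omega))
      have h2 := hall z (hbelow _ (by omega))
      rw [(Gmu μ).adj_comm, gmu_adj_consec μ (i := z+1) (j := z+2) (by omega)] at h1
      rw [(Gmu μ).adj_comm, gmu_adj_far μ (i := z) (j := z+2) (by omega)] at h2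
      rw [h1] at h2; exact Bool.noConfusion h2
    have hx01 : x = 0 ∨ x = 1 := by omega
    rcases hx01 with hx | hx
    · subst hx
      refine Or.inr (Or.inl ⟨hx1, fun j hj => htail j (by omega)⟩)
    · subst hx
      refine Or.inr (Or.inr (Or.inr ⟨?_, hx1, fun j hj => htail j (by omega)⟩))
      have h0 := hall 0 (hbelow 0 (by omega))
      rw [(Gmu μ).adj_comm, gmu_adj_consec μ (i := 0) (j := 1) (by omega)] at h0
      exact h0
  · -- x is adjacent to nothing in M : patterns 1 and 3
    have hx1 : μ (x+1) = false := by
      have h1 := hnone (x+1) (hgt _ (by omega))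
      rw [gmu_adj_consec μ rfl] at h1
      cases hcase : μ (x+1)
      · rfl
      · exact absurd hcase h1
    have htail : ∀ d, x + 2 ≤ d → μ d = true := by
      intro d hd
      have h1 := hnone d (hgt _ (by omega))
      rw [gmu_adj_far μ (by omega)] at h1
      cases hcase : μ d
      · exact absurd hcase h1
      · rfl
    have hbelow : ∀ y, y < x → y ∈ M := by
      intro y hy
      by_contra hyM
      rcases hM y hyM with hall' | hnone'
      · have h1 := hall' (x+2) (hgt _ (by omega))
        rw [gmu_adj_far μ (by omega)] at h1
        rw [htail (x+2) le_rfl] at h1; exact Bool.noConfusion h1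
      · have h1 := hnone' (x+1) (hgt _ (by omega))
        rw [gmu_adj_far μ (by omega)] at h1
        exact h1 hx1
    have hxle : x ≤ 1 := by
      by_contra h
      obtain ⟨z, rfl⟩ : ∃ z, x = z + 2 := ⟨x - 2, by omega⟩
      have h1 := hnone (z+1) (hbelow _ (by omega))
      have h2 := hnone z (hbelow _ (by omega))
      rw [(Gmu μ).adj_comm, gmu_adj_consec μ (i := z+1) (j := z+2) (by omega)] at h1
      rw [(Gmu μ).adj_comm, gmu_adj_far μ (i := z) (j := z+2) (by omega)] at h2
      cases hcase : μ (z+2)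
      · exact h2 hcase
      · exact h1 hcase
    have hx01 : x = 0 ∨ x = 1 := by omega
    rcases hx01 with hx | hx
    · subst hx
      exact Or.inl ⟨hx1, fun j hj => htail j (by omega)⟩
    · subst hx
      refine Or.inr (Or.inr (Or.inl ⟨?_, hx1, fun j hj => htail j (by omega)⟩))
      have h0 := hnone 0 (hbelow 0 (by omega))
      rw [(Gmu μ).adj_comm, gmu_adj_consec μ (i := 0) (j := 1) (by omega)] at h0
      cases hcase : μ 1
      · rfl
      · exact absurd hcase h0

end Helpers

theorem stmt8 (μ : ℕ → Bool) :
    GraphPrime (Gmu μ) ↔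
      ¬ ((μ 1 = false ∧ ∀ j : ℕ, 2 ≤ j → μ j = true) ∨
         (μ 1 = true ∧ ∀ j : ℕ, 2 ≤ j → μ j = false) ∨
         (μ 1 = false ∧ μ 2 = false ∧ ∀ j : ℕ, 3 ≤ j → μ j = true) ∨
         (μ 1 = true ∧ μ 2 = true ∧ ∀ j : ℕ, 3 ≤ j → μ j = false)) := by
  constructor
  · intro hp hexc
    rcases hexc with ⟨h1, hj⟩ | ⟨h1, hj⟩ | ⟨h1, h2, hj⟩ | ⟨h1, h2, hj⟩
    · -- 0111… : vertex 0 is isolated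
      refine not_prime_aux μ 0 (Or.inl fun a ha => ?_) hp
      rcases Nat.lt_or_ge a 2 with h2' | h2'
      · have ha1 : a = 1 := by omega
        subst ha1
        rw [gmu_adj_consec μ (i := 0) (j := 1) (by omega)]
        simp [h1]
      · rw [gmu_adj_far μ (i := 0) (j := a) (by omega)]
        simp [hj a h2']
    · -- 1000… : vertex 0 is adjacent to everything
      refine not_prime_aux μ 0 (Or.inr fun a ha => ?_) hp
      rcases Nat.lt_or_ge a 2 with h2' | h2'
      · have ha1 : a = 1 := by omega
        subst ha1
        rw [gmu_adj_consec μ (i := 0) (j := 1) (by omega)]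
        exact h1
      · rw [gmu_adj_far μ (i := 0) (j := a) (by omega)]
        exact hj a h2'
    · -- 00111… : vertex 1 is isolated
      refine not_prime_aux μ 1 (Or.inl fun a ha => ?_) hp
      have : a = 0 ∨ a = 2 ∨ 3 ≤ a := by omega
      rcases this with rfl | rfl | h3
      · rw [(Gmu μ).adj_comm, gmu_adj_consec μ (i := 0) (j := 1) (by omega)]
        simp [h1]
      · rw [gmu_adj_consec μ (i := 1) (j := 2) (by omega)]
        simp [h2]
      · rw [gmu_adj_far μ (i := 1) (j := a) (by omega)]
        simp [hj a h3]
    · -- 11000… : vertex 1 is adjacent to everything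
      refine not_prime_aux μ 1 (Or.inr fun a ha => ?_) hp
      have : a = 0 ∨ a = 2 ∨ 3 ≤ a := by omega
      rcases this with rfl | rfl | h3
      · rw [(Gmu μ).adj_comm, gmu_adj_consec μ (i := 0) (j := 1) (by omega)]
        exact h1
      · rw [gmu_adj_consec μ (i := 1) (j := 2) (by omega)]
        exact h2
      · rw [gmu_adj_far μ (i := 1) (j := a) (by omega)]
        exact hj a h3
  · intro hexc M hM
    by_cases hss : M.Subsingleton
    · rcases hss.eq_empty_or_singleton with h | h
      · exact Or.inl h
      · exact Or.inr (Or.inl h)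
    · rw [Set.not_subsingleton_iff] at hss
      obtain ⟨a, ha, b, hb, hab⟩ := hss
      refine Or.inr (Or.inr ?_)
      by_contra hne
      rcases hab.lt_or_gt with h | h
      · exact hexc (key_lemma μ M hM ha hb h hne)
      · exact hexc (key_lemma μ M hM hb ha h hne)
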